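/- Let X₁, …, Xₙ be independent real-valued integrable random variables with finite variances on a probability space, and let m > 0 satisfy m > |E[Xₖ]| for every k. Let Zₖ = max(min(Xₖ, m), −m) be the truncation of Xₖ to [−m, m]. Then for every z > 0, P[Σₖ Zₖ − Σₖ E[Xₖ] ≥ z] ≤ exp( Σₖ Var[Xₖ] / (m(m − |E[Xₖ]|)) − z/m ). -/

import Mathlib

open MeasureTheory ProbabilityTheory Real


lemma exp_cubic_bound {u : ℝ} (hu : |u| ≤ 1) :
    exp u ≤ 1 + u + u ^ 2 / 2 + 2 / 9 * |u| ^ 3 := by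
  have h := Real.exp_bound hu (n := 3) (by norm_num)
  have hs : ∑ m ∈ Finset.range 3, u ^ m / m.factorial = 1 + u + u ^ 2 / 2 := by
    simp [Finset.sum_range_succ, Nat.factorial]
  rw [hs] at h
  have h2 := (abs_sub_le_iff.1 h).1
  norm_num [Nat.factorial] at h2
  nlinarith [h2, abs_nonneg u, pow_nonneg (abs_nonneg u) 3]

lemma exp_neg_one_le : exp (-1 : ℝ) ≤ 3 / 4 := by
  have h9 := exp_one_gt_d9
  have hpos := exp_pos (1 : ℝ)
  have hinv : exp (-1 : ℝ) * exp 1 = 1 := by rw [← exp_add]; norm_num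
  nlinarith

lemma exp_le_one_add_add_sq {y : ℝ} (hy : y ≤ 1) : exp y ≤ 1 + y + y ^ 2 := by
  rcases le_or_gt (-1) y with h | h
  · have hb : |y| ≤ 1 := abs_le.2 ⟨h, hy⟩
    have h1 := exp_cubic_bound hb
    have h2 : |y| ^ 3 ≤ y ^ 2 := by
      have e1 : |y| ^ 3 = |y| ^ 2 * |y| := by ring
      have e2 : |y| ^ 2 = y ^ 2 := sq_abs y
      rw [e1, e2]
      nlinarith [sq_nonneg y, abs_nonneg y]
    nlinarith [h1, h2]
  · have h1 : exp y < exp (-1) := exp_lt_exp.2 (by linarith)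
    have h2 := exp_neg_one_le
    nlinarith [sq_nonneg (2*y + 1)]

lemma keyD {a y : ℝ} (ha0 : 0 ≤ a) (ha1 : a < 1) (hy : y ≤ 1 + a) :
    exp y ≤ 1 + y + y ^ 2 / (1 - a) := by
  have h1a : 0 < 1 - a := by linarith
  rcases le_or_gt y 1 with h | h
  · have h1 := exp_le_one_add_add_sq h
    have h2 : y ^ 2 ≤ y ^ 2 / (1 - a) := by
      rw [le_div_iff₀ h1a]; nlinarith [sq_nonneg y]
    linarith
  · have hu0 : 0 ≤ y - 1 := by linarith
    have hu1 : y - 1 ≤ 1 := by linarith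
    have hexpu : exp (y - 1) ≤ 1 + (y - 1) + (y - 1) ^ 2 := exp_le_one_add_add_sq hu1
    have hey : exp y = exp 1 * exp (y - 1) := by rw [← exp_add]; congr 1; ring
    have hE := exp_one_lt_d9
    have hexpy : exp y ≤ 2.7182818286 * (1 + (y - 1) + (y - 1) ^ 2) := by
      rw [hey]
      apply mul_le_mul hE.le hexpu (exp_pos _).le (by norm_num)
    have hpos : 0 ≤ exp y - 1 - y := by have := add_one_le_exp y; linarith
    have hkey : (1 - a) * (exp y - 1 - y) ≤ y ^ 2 := by
      have h2 : (1 - a) * (exp y - 1 - y) ≤ (2 - y) * (exp y - 1 - y) :=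
        mul_le_mul_of_nonneg_right (by linarith) hpos
      have h2y : (0:ℝ) ≤ 2 - y := by linarith
      have h3 : (2 - y) * (exp y - 1 - y) ≤
          (2 - y) * (2.7182818286 * (1 + (y - 1) + (y - 1) ^ 2) - 1 - y) :=
        mul_le_mul_of_nonneg_left (by linarith) h2y
      nlinarith [hu0, hu1, sq_nonneg (y - 1)]
    have : exp y - 1 - y ≤ y ^ 2 / (1 - a) := by
      rw [le_div_iff₀ h1a]; nlinarith [hkey]
    linarith

lemma clamp_exp_bound {m μ : ℝ} (hm : 0 < m) (hμ : |μ| < m) (x : ℝ) :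
    exp ((max (min x m) (-m) - μ) / m) ≤
      1 + (x - μ) / m + (x - μ) ^ 2 / (m * (m - |μ|)) := by
  have hμm := abs_lt.1 hμ
  have ha0 : 0 ≤ |μ| / m := div_nonneg (abs_nonneg μ) hm.le
  have ha1 : |μ| / m < 1 := (div_lt_one hm).2 hμ
  have h1a : 0 < 1 - |μ| / m := by linarith
  have hrw : ∀ s : ℝ, 1 + (s - μ) / m + (s - μ) ^ 2 / (m * (m - |μ|))
      = 1 + ((s - μ) / m) + ((s - μ) / m) ^ 2 / (1 - |μ| / m) := by
    intro s
    have hmm : m - |μ| ≠ 0 := by linarith [hμ]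
    field_simp
  rw [hrw x]
  rcases le_or_gt x m with hxm | hxm
  · rcases le_or_gt (-m) x with hmx | hmx
    · -- clamp = x
      rw [min_eq_left hxm, max_eq_left hmx]
      apply keyD ha0 ha1
      rw [div_le_iff₀ hm]
      have h1 : (1 + |μ| / m) * m = m + |μ| := by field_simp
      rw [h1]
      have := neg_abs_le μ
      linarith
    · -- x < -m : clamp = -m
      rw [min_eq_left (by linarith : x ≤ m), max_eq_right (by linarith : x ≤ -m)]
      set y := (x - μ) / m with hy
      have step1 : 1 - (1 - |μ| / m) / 4 ≤ 1 + y + y ^ 2 / (1 - |μ| / m) := by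
        have hd : (-y - (1 - |μ| / m) / 4) ≤ y ^ 2 / (1 - |μ| / m) := by
          rw [le_div_iff₀ h1a]
          nlinarith [sq_nonneg (2 * y + (1 - |μ| / m))]
        linarith
      have hexpr : (-m - μ) / m = -1 - μ / m := by field_simp
      have step2 : exp ((-m - μ) / m) ≤ 1 - (1 - |μ| / m) / 4 := by
        rw [hexpr]
        rcases le_or_gt 0 μ with hμ0 | hμ0
        · have haa : |μ| = μ := abs_of_nonneg hμ0
          have h3 : exp (-1 - μ / m) ≤ exp (-1) :=
            exp_le_exp.2 (by linarith [div_nonneg hμ0 hm.le])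
          have h4 := exp_neg_one_le
          rw [haa]
          linarith [div_nonneg hμ0 hm.le]
        · have haa : |μ| = -μ := abs_of_neg hμ0
          have hue : -1 - μ / m = |μ| / m - 1 := by rw [haa]; ring
          rw [hue]
          set u := |μ| / m - 1 with hudef
          have hu1 : -1 ≤ u := by simp only [hudef]; linarith
          have hu2 : u ≤ 0 := by simp only [hudef]; linarith
          have habs : |u| ≤ 1 := abs_le.2 ⟨hu1, by linarith⟩
          have h5 := exp_cubic_bound habs
          rw [abs_of_nonpos hu2] at h5
          have hgoal : (1:ℝ) - (1 - |μ| / m) / 4 = 1 + u / 4 := by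
            simp only [hudef]; ring
          rw [hgoal]
          have hinner : 0 ≤ 3 / 4 + u / 2 - 2 / 9 * u ^ 2 := by nlinarith [sq_nonneg u]
          nlinarith [mul_nonpos_of_nonpos_of_nonneg hu2 hinner]
      linarith
  · -- x > m : clamp = m
    rw [min_eq_right hxm.le, max_eq_left (by linarith : -m ≤ m)]
    have hw : (m - μ) / m ≤ 1 + |μ| / m := by
      rw [div_le_iff₀ hm]
      have h1 : (1 + |μ| / m) * m = m + |μ| := by field_simp
      rw [h1]
      linarith [neg_abs_le μ]
    have h7 := keyD ha0 ha1 hw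
    have hw0 : 0 < (m - μ) / m := div_pos (by linarith : 0 < m - μ) hm
    have hwy : (m - μ) / m ≤ (x - μ) / m := by
      gcongr
    have hsq : ((m - μ) / m) ^ 2 ≤ ((x - μ) / m) ^ 2 := by nlinarith
    have hdd : ((m - μ) / m) ^ 2 / (1 - |μ| / m) ≤ ((x - μ) / m) ^ 2 / (1 - |μ| / m) := by
      gcongr
    linarith

lemma iIndepFun_ae_congr {Ω ι : Type*} [MeasurableSpace Ω] {μ : Measure Ω}
    {f g : ι → Ω → ℝ} (hf : iIndepFun f μ)
    (h : ∀ i, f i =ᵐ[μ] g i) : iIndepFun g μ := by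
  rw [iIndepFun_iff_measure_inter_preimage_eq_mul] at hf ⊢
  intro S sets hsets
  have hae : ∀ᵐ ω ∂μ, ∀ i ∈ S, f i ω = g i ω :=
    (ae_ball_iff S.countable_toSet).2 fun i _ => h i
  have h1 : (⋂ i ∈ S, g i ⁻¹' sets i : Set Ω) =ᵐ[μ] (⋂ i ∈ S, f i ⁻¹' sets i) := by
    filter_upwards [hae] with ω hω
    have hiff : ∀ i ∈ S, (ω ∈ g i ⁻¹' sets i ↔ ω ∈ f i ⁻¹' sets i) := fun i hi => by
      simp only [Set.mem_preimage, hω i hi]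
    show (ω ∈ ⋂ i ∈ S, g i ⁻¹' sets i) = (ω ∈ ⋂ i ∈ S, f i ⁻¹' sets i)
    simp only [eq_iff_iff, Set.mem_iInter]
    exact ⟨fun hm i hi => (hiff i hi).1 (hm i hi), fun hm i hi => (hiff i hi).2 (hm i hi)⟩
  rw [measure_congr h1, hf S hsets]
  exact Finset.prod_congr rfl fun i hi =>
    measure_congr ((h i).mono fun ω hω => by
      show (f i ω ∈ sets i) = (g i ω ∈ sets i)
      rw [hω])

/-- one-sided concentration for sums of truncated random variables.
For independent integrable real random variables `X 1, …, X n` with finite variances,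
`m > |E[X k]|` for all `k`, and `Z k = max (min (X k) m) (-m)`, for every `z > 0`,
`P[Σ Z k - Σ E[X k] ≥ z] ≤ exp(Σ Var[X k]/(m(m - |E[X k]|)) - z/m)`. -/
theorem truncation_concentration_one_sided {Ω : Type*} [MeasureSpace Ω]
    [IsProbabilityMeasure (ℙ : Measure Ω)] (n : ℕ) (X : Fin n → Ω → ℝ)
    (hXind : iIndepFun X ℙ)
    (hXint : ∀ k, Integrable (X k)) (hX2 : ∀ k, MemLp (X k) 2 ℙ)
    (m : ℝ) (hm : 0 < m) (hmE : ∀ k, |∫ ω, X k ω| < m)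
    (Z : Fin n → Ω → ℝ) (hZ : ∀ k ω, Z k ω = max (min (X k ω) m) (-m))
    (z : ℝ) (hz : 0 < z) :
    ℙ {ω | z ≤ (∑ k, Z k ω) - ∑ k, ∫ ω', X k ω'} ≤
      ENNReal.ofReal
        (exp ((∑ k, variance (X k) ℙ / (m * (m - |∫ ω, X k ω|))) - z / m)) := by
  classical
  set μk : Fin n → ℝ := fun k => ∫ ω, X k ω with hμk
  have hμm : ∀ k, |μk k| < m := hmE
  set t : ℝ := 1 / m with htdef
  have ht : 0 < t := by positivity
  -- measurable representatives
  set X' : Fin n → Ω → ℝ := fun k => (hXint k).1.mk (X k) with hX'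
  have hX'meas : ∀ k, Measurable (X' k) := fun k =>
    (hXint k).1.stronglyMeasurable_mk.measurable
  have hX'ae : ∀ k, X k =ᵐ[ℙ] X' k := fun k => (hXint k).1.ae_eq_mk
  set W : Fin n → Ω → ℝ := fun k ω => max (min (X' k ω) m) (-m) - μk k with hW
  have hWmeas : ∀ k, Measurable (W k) := fun k =>
    (((hX'meas k).min measurable_const).max measurable_const).sub measurable_const
  have hWae : ∀ k, (fun ω => Z k ω - μk k) =ᵐ[ℙ] W k := fun k =>
    (hX'ae k).mono fun ω h => by simp only [hW, hZ k ω, h]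
  -- independence of W
  have hWind : iIndepFun W ℙ := by
    have hcomp := hXind.comp (fun k (x : ℝ) => max (min x m) (-m) - μk k)
      (fun k => ((measurable_id.min measurable_const).max measurable_const).sub measurable_const)
    exact iIndepFun_ae_congr hcomp fun k =>
      (hX'ae k).mono fun ω h => by simp only [Function.comp, hW, h]
  -- integrability of exp (t * W k)
  have hWbd : ∀ k ω, W k ω ≤ m + |μk k| := by
    intro k ω
    have h1 : max (min (X' k ω) m) (-m) ≤ m :=
      max_le (min_le_right _ _) (by linarith)
    have h2 := neg_abs_le (μk k)
    simp only [hW]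
    linarith
  have hint_exp : ∀ k, Integrable (fun ω => exp (t * W k ω)) ℙ := by
    intro k
    refine Integrable.mono' (integrable_const (exp (t * (m + |μk k|))))
      (((hWmeas k).const_mul t).exp.aestronglyMeasurable) ?_
    filter_upwards with ω
    rw [Real.norm_eq_abs, Real.abs_exp]
    exact exp_le_exp.2 (mul_le_mul_of_nonneg_left (hWbd k ω) ht.le)
  -- mgf bound for each k
  have hconst : ∀ k, (0:ℝ) < m * (m - |μk k|) := fun k =>
    mul_pos hm (by linarith [hμm k])
  have hmgf_le : ∀ k, mgf (W k) ℙ t ≤ exp (variance (X k) ℙ / (m * (m - |μk k|))) := by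
    intro k
    have hptae : ∀ᵐ ω ∂ℙ, exp (t * W k ω) ≤
        1 + (X k ω - μk k) / m + (X k ω - μk k) ^ 2 / (m * (m - |μk k|)) := by
      filter_upwards [hX'ae k] with ω hω
      have hcb := clamp_exp_bound hm (hμm k) (X k ω)
      have harg : t * W k ω = (max (min (X k ω) m) (-m) - μk k) / m := by
        simp only [hW, htdef, hω]
        ring
      rw [harg]
      exact hcb
    have hXsub2 : MemLp (fun ω => X k ω - μk k) 2 ℙ := (hX2 k).sub (memLp_const (μk k))
    have hint2 : Integrable (fun ω => (X k ω - μk k) ^ 2) ℙ := hXsub2.integrable_sq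
    have hintsub : Integrable (fun ω => (X k ω - μk k) / m) ℙ :=
      ((hXint k).sub (integrable_const _)).div_const m
    have hint2' : Integrable (fun ω => (X k ω - μk k) ^ 2 / (m * (m - |μk k|))) ℙ :=
      hint2.div_const _
    have hintA : Integrable (fun ω => 1 + (X k ω - μk k) / m) ℙ :=
      (integrable_const 1).add hintsub
    have hintR : Integrable
        (fun ω => 1 + (X k ω - μk k) / m + (X k ω - μk k) ^ 2 / (m * (m - |μk k|))) ℙ :=
      hintA.add hint2'
    have hle := integral_mono_ae (hint_exp k) hintR hptae
    have hEX : ∫ ω, (X k ω - μk k) ∂ℙ = 0 := by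
      rw [integral_sub (hXint k) (integrable_const _), integral_const, probReal_univ,
        one_smul]
      simp [hμk]
    have hvar : ∫ ω, (X k ω - μk k) ^ 2 ∂ℙ = variance (X k) ℙ := by
      rw [variance_eq_integral (hX := (hX2 k).aestronglyMeasurable.aemeasurable)]
    have hRint : ∫ ω, (1 + (X k ω - μk k) / m + (X k ω - μk k) ^ 2 / (m * (m - |μk k|))) ∂ℙ
        = 1 + variance (X k) ℙ / (m * (m - |μk k|)) := by
      rw [integral_add hintA hint2',
        integral_add (integrable_const 1) hintsub, integral_const, probReal_univ,
        one_smul, integral_div, integral_div, hEX, hvar]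
      simp
    have h1 : mgf (W k) ℙ t ≤ 1 + variance (X k) ℙ / (m * (m - |μk k|)) := by
      rw [← hRint]
      exact hle
    have h2 : (0:ℝ) ≤ variance (X k) ℙ / (m * (m - |μk k|)) :=
      div_nonneg (variance_nonneg _ _) (hconst k).le
    have h3 := add_one_le_exp (variance (X k) ℙ / (m * (m - |μk k|)))
    linarith
  -- Chernoff
  have hSint : Integrable (fun ω => exp (t * (∑ k, W k) ω)) ℙ :=
    hWind.integrable_exp_mul_sum hWmeas (fun k _ => hint_exp k)
  have hch := measure_ge_le_exp_mul_mgf (μ := ℙ) (X := ∑ k, W k) z ht.le hSint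
  have hmgfsum : mgf (∑ k, W k) ℙ t = ∏ k, mgf (W k) ℙ t := hWind.mgf_sum hWmeas Finset.univ
  -- event identification
  have hsetae : ℙ {ω | z ≤ (∑ k, Z k ω) - ∑ k, μk k} = ℙ {ω | z ≤ (∑ k, W k) ω} := by
    apply measure_congr
    have hae : ∀ᵐ ω ∂ℙ, ∀ k, Z k ω - μk k = W k ω := ae_all_iff.2 fun k => hWae k
    filter_upwards [hae] with ω hω
    have hsum : (∑ k, Z k ω) - ∑ k, μk k = (∑ k, W k) ω := by
      rw [Finset.sum_apply, ← Finset.sum_sub_distrib]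
      exact Finset.sum_congr rfl fun k _ => hω k
    show (z ≤ (∑ k, Z k ω) - ∑ k, μk k) = (z ≤ (∑ k, W k) ω)
    rw [hsum]
  have hfin : (ℙ {ω | z ≤ (∑ k, W k) ω}).toReal ≤
      exp ((∑ k, variance (X k) ℙ / (m * (m - |μk k|))) - z / m) := by
    calc (ℙ {ω | z ≤ (∑ k, W k) ω}).toReal
        ≤ exp (-t * z) * mgf (∑ k, W k) ℙ t := hch
      _ = exp (-t * z) * ∏ k, mgf (W k) ℙ t := by rw [hmgfsum]
      _ ≤ exp (-t * z) * ∏ k, exp (variance (X k) ℙ / (m * (m - |μk k|))) := by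
          apply mul_le_mul_of_nonneg_left _ (exp_pos _).le
          exact Finset.prod_le_prod (fun k _ => mgf_nonneg) (fun k _ => hmgf_le k)
      _ = exp ((∑ k, variance (X k) ℙ / (m * (m - |μk k|))) - z / m) := by
          rw [← Real.exp_sum, ← exp_add]
          congr 1
          simp only [htdef]
          ring
  rw [hsetae]
  have := ENNReal.ofReal_le_ofReal hfin
  rwa [ENNReal.ofReal_toReal (measure_ne_top _ _)] at this
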